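/- For every real q > 0 and all m, n ≥ 0, the weighted counting polynomials of ternary square-free words satisfy s_{n+m}(q) ≤ s_n(q) · s_m(q), where s_n(q) = Σ_{k=0}^{n} s_{n,k} q^k and s_{n,k} is the number of ternary square-free words of length n containing exactly k occurrences of the fixed letter a. -/

import Mathlib

/-- A word `w` is square-free if whenever `w = x ++ y ++ y ++ z`,
then `y` is the empty word. -/
def SquareFree {α : Type*} (w : List α) : Prop :=
  ∀ x y z : List α, w = x ++ y ++ y ++ z → y = []

/-- `s2 n k` is the number of ternary square-free words of length `n`
containing exactly `k` occurrences of the letter `a` (here `0 : Fin 3`). -/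
noncomputable def s2 (n k : ℕ) : ℕ :=
  Nat.card {w : List (Fin 3) // w.length = n ∧ SquareFree w ∧ w.count 0 = k}

/-- The weighted counting polynomial `s_n(q) = Σ_{k=0}^{n} s_{n,k} q^k`. -/
noncomputable def sPoly (n : ℕ) (q : ℝ) : ℝ :=
  ∑ k ∈ Finset.range (n + 1), (s2 n k : ℝ) * q ^ k

/-- For every real `q > 0`, the weighted counting polynomials of ternary
square-free words satisfy `s_{n+m}(q) ≤ s_n(q) * s_m(q)`. -/
lemma sqf_prefix {α : Type*} {u v : List α} (h : SquareFree (u ++ v)) : SquareFree u := by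
  intro x y z hxy
  exact h x y (z ++ v) (by simp [hxy, List.append_assoc])

lemma sqf_suffix {α : Type*} {u v : List α} (h : SquareFree (u ++ v)) : SquareFree v := by
  intro x y z hxy
  exact h (u ++ x) y z (by simp [hxy, List.append_assoc])

lemma finSF (n : ℕ) : {l : List (Fin 3) | l.length = n ∧ SquareFree l}.Finite :=
  (List.finite_length_eq (Fin 3) n).subset fun _ hl => hl.1

noncomputable def SF (n : ℕ) : Finset (List (Fin 3)) := (finSF n).toFinset

lemma mem_SF {n : ℕ} {w : List (Fin 3)} : w ∈ SF n ↔ w.length = n ∧ SquareFree w := by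
  simp [SF, Set.Finite.mem_toFinset]

open Classical in
lemma s2_card (n k : ℕ) : (s2 n k : ℕ) = ((SF n).filter (fun w => w.count 0 = k)).card := by
  have h : {w : List (Fin 3) | w.length = n ∧ SquareFree w ∧ w.count 0 = k}.Finite :=
    (finSF n).subset fun _ hl => ⟨hl.1, hl.2.1⟩
  rw [s2, show Nat.card {w : List (Fin 3) // w.length = n ∧ SquareFree w ∧ w.count 0 = k}
      = Nat.card ↑{w : List (Fin 3) | w.length = n ∧ SquareFree w ∧ w.count 0 = k} from rfl,
    Nat.card_coe_set_eq, Set.ncard_eq_toFinset_card _ h]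
  congr 1
  ext w
  simp [Set.Finite.mem_toFinset, mem_SF, and_assoc]

open Classical Finset in
lemma sPoly_eq (n : ℕ) (q : ℝ) : sPoly n q = ∑ w ∈ SF n, q ^ (w.count 0) := by
  rw [sPoly]
  rw [← Finset.sum_fiberwise_of_maps_to (g := fun w : List (Fin 3) => w.count 0)
      (t := Finset.range (n + 1)) (fun w hw => by
        simp only [Finset.mem_range]
        exact Nat.lt_succ_of_le (List.count_le_length.trans_eq (mem_SF.mp hw).1))]
  refine Finset.sum_congr rfl fun k _ => ?_
  rw [s2_card]
  rw [Finset.sum_congr rfl (fun w hw => by rw [(Finset.mem_filter.mp hw).2])]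
  rw [Finset.sum_const, nsmul_eq_mul]

theorem ternary_squareFree_weighted_submultiplicative
    (q : ℝ) (hq : 0 < q) (n m : ℕ) :
    sPoly (n + m) q ≤ sPoly n q * sPoly m q := by
  classical
  rw [sPoly_eq, sPoly_eq, sPoly_eq, Finset.sum_mul_sum, ← Finset.sum_product']
  have key : ∀ w ∈ SF (n + m), q ^ (w.count 0)
      = q ^ ((w.take n).count 0) * q ^ ((w.drop n).count 0) := by
    intro w hw
    rw [← pow_add, ← List.count_append, List.take_append_drop]
  rw [Finset.sum_congr rfl key]
  have hinj : Set.InjOn (fun w : List (Fin 3) => (w.take n, w.drop n)) (SF (n + m)) := by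
    intro a _ b _ h
    have := congrArg (fun p : List (Fin 3) × List (Fin 3) => p.1 ++ p.2) h
    simpa [List.take_append_drop] using this
  rw [show (∑ w ∈ SF (n + m), q ^ ((w.take n).count 0) * q ^ ((w.drop n).count 0))
      = ∑ p ∈ (SF (n + m)).image (fun w => (w.take n, w.drop n)),
          q ^ (p.1.count 0) * q ^ (p.2.count 0) from
    (Finset.sum_image (f := fun p : List (Fin 3) × List (Fin 3) => q ^ (p.1.count 0) * q ^ (p.2.count 0)) (fun a ha b hb h => hinj ha hb h)).symm]
  refine Finset.sum_le_sum_of_subset_of_nonneg ?_ (fun _ _ _ => by positivity)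
  intro p hp
  obtain ⟨w, hw, rfl⟩ := Finset.mem_image.mp hp
  obtain ⟨hlen, hsf⟩ := mem_SF.mp hw
  have hsf' : SquareFree (w.take n ++ w.drop n) := by rwa [List.take_append_drop]
  refine Finset.mem_product.mpr ⟨mem_SF.mpr ⟨?_, sqf_prefix hsf'⟩,
    mem_SF.mpr ⟨?_, sqf_suffix hsf'⟩⟩
  · rw [List.length_take, hlen]; omega
  · rw [List.length_drop, hlen]; omega
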